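/- (Uniqueness part of dKdV continued fraction) With β > 0, suppose (u_n) and (ũ_n) are two positive sequences both satisfying u_n = x_n/(1 + β x_n u_{n−1}) for all n ∈ ℤ. Then |u_n − ũ_n| ≤ exp(Σ_{k=m}^{n} (log β + 2 log x_k) + log x_{m−1}) for all m ≤ n; hence if for each n the right-hand side tends to 0 as m → −∞, the two sequences coincide. -/

import Mathlib

open Filter

theorem dKdV_uniqueness_bound (β : ℝ) (hβ : 0 < β)
    (x : ℤ → ℝ) (hx : ∀ n : ℤ, 0 < x n)
    (u v : ℤ → ℝ) (hu : ∀ n : ℤ, 0 < u n) (hv : ∀ n : ℤ, 0 < v n)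
    (hurec : ∀ n : ℤ, u n = x n / (1 + β * x n * u (n - 1)))
    (hvrec : ∀ n : ℤ, v n = x n / (1 + β * x n * v (n - 1))) :
    (∀ m n : ℤ, m ≤ n →
      |u n - v n| ≤
        Real.exp ((∑ k ∈ Finset.Icc m n, (Real.log β + 2 * Real.log (x k))) +
          Real.log (x (m - 1)))) ∧
      ((∀ n : ℤ, Tendsto
          (fun m : ℤ =>
            Real.exp ((∑ k ∈ Finset.Icc m n, (Real.log β + 2 * Real.log (x k))) +
              Real.log (x (m - 1))))
          atBot (nhds 0)) →
        u = v) := by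
  -- denominators are ≥ 1
  have hdu : ∀ n : ℤ, (1:ℝ) ≤ 1 + β * x n * u (n - 1) := by
    intro n
    have := mul_pos (mul_pos hβ (hx n)) (hu (n-1)); linarith
  have hdv : ∀ n : ℤ, (1:ℝ) ≤ 1 + β * x n * v (n - 1) := by
    intro n
    have := mul_pos (mul_pos hβ (hx n)) (hv (n-1)); linarith
  have hub : ∀ n : ℤ, u n ≤ x n := by
    intro n; rw [hurec n]; exact div_le_self (hx n).le (hdu n)
  have hvb : ∀ n : ℤ, v n ≤ x n := by
    intro n; rw [hvrec n]; exact div_le_self (hx n).le (hdv n)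
  -- one-step contraction bound
  have hstep : ∀ n : ℤ, |u n - v n| ≤ β * x n ^ 2 * |u (n - 1) - v (n - 1)| := by
    intro n
    have ha : (0:ℝ) < 1 + β * x n * u (n - 1) := lt_of_lt_of_le one_pos (hdu n)
    have hb : (0:ℝ) < 1 + β * x n * v (n - 1) := lt_of_lt_of_le one_pos (hdv n)
    have key : u n - v n =
        (β * x n ^ 2 * (v (n - 1) - u (n - 1))) /
          ((1 + β * x n * u (n - 1)) * (1 + β * x n * v (n - 1))) := by
      rw [hurec n, hvrec n]
      rw [div_sub_div _ _ ha.ne' hb.ne']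
      ring
    have hD : (1:ℝ) ≤ (1 + β * x n * u (n - 1)) * (1 + β * x n * v (n - 1)) := by
      nlinarith [hdu n, hdv n]
    calc |u n - v n|
        = |β * x n ^ 2 * (v (n - 1) - u (n - 1))| /
            |(1 + β * x n * u (n - 1)) * (1 + β * x n * v (n - 1))| := by
          rw [key, abs_div]
      _ ≤ |β * x n ^ 2 * (v (n - 1) - u (n - 1))| := by
          rw [abs_of_pos (mul_pos ha hb)]
          exact div_le_self (abs_nonneg _) hD
      _ = β * x n ^ 2 * |u (n - 1) - v (n - 1)| := by
          rw [abs_mul, abs_of_pos (mul_pos hβ (pow_pos (hx n) 2)), abs_sub_comm]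
  have hxdiff : ∀ n : ℤ, |u n - v n| ≤ x n := by
    intro n
    rw [abs_sub_le_iff]
    constructor <;> nlinarith [hub n, hvb n, hu n, hv n]
  have hexp : ∀ k : ℤ, Real.exp (Real.log β + 2 * Real.log (x k)) = β * x k ^ 2 := by
    intro k
    rw [show (2:ℝ) * Real.log (x k) = Real.log (x k ^ 2) by
        rw [Real.log_pow]; push_cast; ring,
      Real.exp_add, Real.exp_log hβ, Real.exp_log (pow_pos (hx k) 2)]
  -- the main inductive bound
  have main : ∀ m n : ℤ, m ≤ n →
      |u n - v n| ≤
        Real.exp (∑ k ∈ Finset.Icc m n, (Real.log β + 2 * Real.log (x k))) * x (m - 1) := by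
    intro m
    refine Int.le_induction ?_ ?_
    · -- base case n = m
      rw [Finset.Icc_self, Finset.sum_singleton, hexp]
      calc |u m - v m| ≤ β * x m ^ 2 * |u (m - 1) - v (m - 1)| := hstep m
        _ ≤ β * x m ^ 2 * x (m - 1) :=
            mul_le_mul_of_nonneg_left (hxdiff (m - 1))
              (mul_pos hβ (pow_pos (hx m) 2)).le
    · intro n hn ih
      have hins : Finset.Icc m (n + 1) = insert (n + 1) (Finset.Icc m n) := by
        ext k; simp only [Finset.mem_Icc, Finset.mem_insert]; omega
      rw [hins, Finset.sum_insert (by simp), Real.exp_add, hexp]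
      calc |u (n + 1) - v (n + 1)|
          ≤ β * x (n + 1) ^ 2 * |u (n + 1 - 1) - v (n + 1 - 1)| := hstep (n + 1)
        _ = β * x (n + 1) ^ 2 * |u n - v n| := by norm_num
        _ ≤ β * x (n + 1) ^ 2 *
            (Real.exp (∑ k ∈ Finset.Icc m n, (Real.log β + 2 * Real.log (x k))) * x (m - 1)) := by
            exact mul_le_mul_of_nonneg_left ih
              (mul_pos hβ (pow_pos (hx (n + 1)) 2)).le
        _ = β * x (n + 1) ^ 2 *
            Real.exp (∑ k ∈ Finset.Icc m n, (Real.log β + 2 * Real.log (x k))) * x (m - 1) := by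
            ring
  have first : ∀ m n : ℤ, m ≤ n →
      |u n - v n| ≤
        Real.exp ((∑ k ∈ Finset.Icc m n, (Real.log β + 2 * Real.log (x k))) +
          Real.log (x (m - 1))) := by
    intro m n hmn
    rw [Real.exp_add, Real.exp_log (hx (m - 1))]
    exact main m n hmn
  refine ⟨first, ?_⟩
  intro h
  funext n
  have hle : |u n - v n| ≤ 0 := by
    refine ge_of_tendsto (h n) ?_
    filter_upwards [eventually_le_atBot n] with m hm
    exact first m n hm
  have : u n - v n = 0 := abs_eq_zero.mp (le_antisymm hle (abs_nonneg _))
  linarith
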